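/- Let b ≥ 2 and m ≥ 1 be integers and let y be the least natural number with b^y ≥ m. Then the staircase index set S = {(i, j) : 0 ≤ i ≤ j < m} can be partitioned into a finite family F of pairwise disjoint interval rectangles whose union is S, such that: (1) the family F has at most 2·b^y − 1 members; (2) every row index i ∈ {0, …, m−1} belongs to the row interval of at most y + 1 members of F; and (3) every column index j ∈ {0, …, m−1} belongs to the column interval of at most y·(b − 1) + 1 members of F. (Lemma 6 (l:part) of the paper for arbitrary m, obtained by padding m up to a power of b and trimming dummy rows and columns.) -/

import Mathlib

/-- The interval rectangle `{a, …, a'} × {c, …, c'}` described by a pair of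
pairs `((a, a'), (c, c'))`, as a finset of `ℕ × ℕ`. -/
def rect (e : (ℕ × ℕ) × (ℕ × ℕ)) : Finset (ℕ × ℕ) :=
  Finset.Icc e.1.1 e.1.2 ×ˢ Finset.Icc e.2.1 e.2.2

namespace StaircaseAux

lemma div_eq_iff' {u : ℕ} (hu : 0 < u) (A i : ℕ) :
    i / u = A ↔ A * u ≤ i ∧ i < (A + 1) * u := by
  constructor
  · rintro rfl
    have h1 := Nat.div_add_mod i u
    have h2 := Nat.mod_lt i hu
    have h3 : (i / u + 1) * u = u * (i / u) + u := by ring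
    have h4 : i / u * u = u * (i / u) := by ring
    exact ⟨by omega, by omega⟩
  · rintro ⟨h1, h2⟩; exact Nat.div_eq_of_lt_le h1 h2

lemma mem_rect_iff {a a' c c' i j : ℕ} :
    (i, j) ∈ rect ((a, a'), (c, c')) ↔ (a ≤ i ∧ i ≤ a') ∧ (c ≤ j ∧ j ≤ c') := by
  simp [rect, Finset.mem_Icc]

def elt (b t p k : ℕ) : (ℕ × ℕ) × (ℕ × ℕ) :=
  ((p * b ^ (t+1) + k * b ^ t, p * b ^ (t+1) + (k+1) * b ^ t - 1),
   (p * b ^ (t+1) + (k+1) * b ^ t, p * b ^ (t+1) + b ^ (t+1) - 1))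

lemma row_elt {b : ℕ} (hb : 0 < b) (t p k i : ℕ) :
    ((elt b t p k).1.1 ≤ i ∧ i ≤ (elt b t p k).1.2) ↔ i / b ^ t = p * b + k := by
  have hu : 0 < b ^ t := pow_pos hb t
  simp only [elt]
  rw [div_eq_iff' hu]
  have e1 : p * b ^ (t+1) + k * b ^ t = (p * b + k) * b ^ t := by
    rw [pow_succ]; ring
  have e2 : p * b ^ (t+1) + (k+1) * b ^ t = (p * b + k) * b ^ t + b ^ t := by
    rw [pow_succ]; ring
  have e3 : (p * b + k + 1) * b ^ t = (p * b + k) * b ^ t + b ^ t := by ring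
  omega

lemma col_elt {b : ℕ} (hb : 0 < b) (t p k j : ℕ) :
    ((elt b t p k).2.1 ≤ j ∧ j ≤ (elt b t p k).2.2) ↔
      j / b ^ (t+1) = p ∧ p * b + k < j / b ^ t := by
  have hu : 0 < b ^ t := pow_pos hb t
  have hB : 0 < b ^ (t+1) := pow_pos hb (t+1)
  have hlt : p * b + k < j / b ^ t ↔ (p * b + k) * b ^ t + b ^ t ≤ j := by
    rw [Nat.lt_iff_add_one_le, Nat.le_div_iff_mul_le hu]
    constructor <;> intro h <;> [skip; skip] <;>
      · have : (p * b + k + 1) * b ^ t = (p * b + k) * b ^ t + b ^ t := by ring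
        omega
  simp only [elt]
  rw [div_eq_iff' hB, hlt]
  have e2 : p * b ^ (t+1) + (k+1) * b ^ t = (p * b + k) * b ^ t + b ^ t := by
    rw [pow_succ]; ring
  have e4 : (p + 1) * b ^ (t+1) = p * b ^ (t+1) + b ^ (t+1) := by ring
  have e5 : p * b ^ (t+1) ≤ (p * b + k) * b ^ t := by
    calc p * b ^ (t+1) = (p * b) * b ^ t := by rw [pow_succ]; ring
    _ ≤ (p * b + k) * b ^ t := Nat.mul_le_mul_right _ (Nat.le_add_right _ _)
  omega

lemma mem_rect_elt {b : ℕ} (hb : 0 < b) (t p k i j : ℕ) :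
    (i, j) ∈ rect (elt b t p k) ↔
      i / b ^ t = p * b + k ∧ j / b ^ (t+1) = p ∧ p * b + k < j / b ^ t := by
  have h0 : (i, j) ∈ rect (elt b t p k) ↔
      (((elt b t p k).1.1 ≤ i ∧ i ≤ (elt b t p k).1.2) ∧
        ((elt b t p k).2.1 ≤ j ∧ j ≤ (elt b t p k).2.2)) := by
    simp [rect, Finset.mem_Icc]
  rw [h0, row_elt hb, col_elt hb]

def diag (n : ℕ) : Finset ((ℕ × ℕ) × (ℕ × ℕ)) :=
  (Finset.range n).image (fun a => ((a, a), (a, a)))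

def off (b y : ℕ) : Finset ((ℕ × ℕ) × (ℕ × ℕ)) :=
  (Finset.range y).biUnion (fun t =>
    (Finset.range (b ^ (y - 1 - t)) ×ˢ Finset.range (b - 1)).image
      (fun pk => elt b t pk.1 pk.2))

def fam (b y : ℕ) : Finset ((ℕ × ℕ) × (ℕ × ℕ)) := diag (b ^ y) ∪ off b y

lemma mem_fam {b y : ℕ} {e : (ℕ × ℕ) × (ℕ × ℕ)} : e ∈ fam b y ↔
    (∃ a, a < b ^ y ∧ e = ((a, a), (a, a))) ∨
    (∃ t, t < y ∧ ∃ p, p < b ^ (y - 1 - t) ∧ ∃ k, k < b - 1 ∧ e = elt b t p k) := by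
  simp only [fam, diag, off, Finset.mem_union, Finset.mem_image, Finset.mem_biUnion,
    Finset.mem_product, Finset.mem_range, Prod.exists]
  constructor
  · rintro (⟨a, ha, rfl⟩ | ⟨t, ht, p, k, ⟨hp, hk⟩, rfl⟩)
    · exact Or.inl ⟨a, ha, rfl⟩
    · exact Or.inr ⟨t, ht, p, hp, k, hk, rfl⟩
  · rintro (⟨a, ha, rfl⟩ | ⟨t, ht, p, hp, k, hk, rfl⟩)
    · exact Or.inl ⟨a, ha, rfl⟩
    · exact Or.inr ⟨t, ht, p, k, ⟨hp, hk⟩, rfl⟩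

lemma div_succ' {b : ℕ} (hb : 0 < b) {i t p k : ℕ} (h : i / b ^ t = p * b + k)
    (hk : k < b) : i / b ^ (t+1) = p := by
  rw [pow_succ, ← Nat.div_div_eq_div_mul, h, add_comm, Nat.add_mul_div_right _ _ hb,
    Nat.div_eq_of_lt hk, zero_add]

lemma agree {b i j s t : ℕ} (h : i / b ^ t = j / b ^ t) (hst : t ≤ s) :
    i / b ^ s = j / b ^ s := by
  obtain ⟨d, rfl⟩ := Nat.exists_eq_add_of_le hst
  rw [pow_add, ← Nat.div_div_eq_div_mul, ← Nat.div_div_eq_div_mul, h]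

lemma fam_nonempty {b y : ℕ} (hb : 2 ≤ b) {e : (ℕ × ℕ) × (ℕ × ℕ)} (he : e ∈ fam b y) :
    e.1.1 ≤ e.1.2 ∧ e.2.1 ≤ e.2.2 := by
  have hb0 : 0 < b := by omega
  rw [mem_fam] at he
  rcases he with ⟨a, _, rfl⟩ | ⟨t, _, p, _, k, hk, rfl⟩
  · exact ⟨le_refl _, le_refl _⟩
  · have hu : 0 < b ^ t := pow_pos hb0 t
    have e2 : p * b ^ (t+1) + (k+1) * b ^ t = (p * b ^ (t+1) + k * b ^ t) + b ^ t := by ring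
    have e6 : (k+1) * b ^ t + b ^ t = (k+2) * b ^ t := by ring
    have e7 : (k+2) * b ^ t ≤ b * b ^ t := Nat.mul_le_mul_right _ (by omega)
    have e8 : b * b ^ t = b ^ (t+1) := by rw [pow_succ]; ring
    exact ⟨by simp only [elt]; omega, by simp only [elt]; omega⟩

lemma fam_sound {b y : ℕ} (hb : 2 ≤ b) {e : (ℕ × ℕ) × (ℕ × ℕ)} {i j : ℕ}
    (he : e ∈ fam b y) (hij : (i, j) ∈ rect e) : i ≤ j ∧ j < b ^ y := by
  have hb0 : 0 < b := by omega
  rw [mem_fam] at he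
  rcases he with ⟨a, ha, rfl⟩ | ⟨t, ht, p, hp, k, hk, rfl⟩
  · rw [mem_rect_iff] at hij; omega
  · rw [mem_rect_elt hb0] at hij
    obtain ⟨h1, h2, h3⟩ := hij
    have hu : 0 < b ^ t := pow_pos hb0 t
    have hB : 0 < b ^ (t+1) := pow_pos hb0 (t+1)
    constructor
    · have hi : i < (p * b + k + 1) * b ^ t := ((div_eq_iff' hu _ i).mp h1).2
      have hj : (p * b + k + 1) * b ^ t ≤ j := by
        rw [Nat.lt_iff_add_one_le, Nat.le_div_iff_mul_le hu] at h3
        exact h3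
      exact le_of_lt (lt_of_lt_of_le hi hj)
    · have hj : j < (p + 1) * b ^ (t+1) := ((div_eq_iff' hB _ j).mp h2).2
      have h4 : (p + 1) * b ^ (t+1) ≤ b ^ (y - 1 - t) * b ^ (t+1) :=
        Nat.mul_le_mul_right _ (by omega)
      have h5 : b ^ (y - 1 - t) * b ^ (t+1) = b ^ y := by
        rw [← pow_add]; congr 1; omega
      exact lt_of_lt_of_le hj (h4.trans_eq h5)

lemma fam_unique {b y : ℕ} (hb : 2 ≤ b) {e1 e2 : (ℕ × ℕ) × (ℕ × ℕ)} {i j : ℕ}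
    (h1 : e1 ∈ fam b y) (h2 : e2 ∈ fam b y)
    (m1 : (i, j) ∈ rect e1) (m2 : (i, j) ∈ rect e2) : e1 = e2 := by
  have hb0 : 0 < b := by omega
  have key : ∀ t1 p1 k1 t2 p2 k2 : ℕ, k1 < b - 1 → k2 < b - 1 →
      (i, j) ∈ rect (elt b t1 p1 k1) → (i, j) ∈ rect (elt b t2 p2 k2) →
      t1 < t2 → False := by
    intro t1 p1 k1 t2 p2 k2 hk1 hk2 mm1 mm2 hlt
    rw [mem_rect_elt hb0] at mm1 mm2
    obtain ⟨a1, b1, c1⟩ := mm1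
    obtain ⟨a2, b2, c2⟩ := mm2
    have hi1 : i / b ^ (t1+1) = p1 := div_succ' hb0 a1 (by omega)
    have hagree : i / b ^ t2 = j / b ^ t2 := agree (by rw [hi1, b1]) (by omega)
    rw [← hagree, a2] at c2
    exact lt_irrefl _ c2
  rw [mem_fam] at h1 h2
  rcases h1 with ⟨a1, ha1, rfl⟩ | ⟨t1, ht1, p1, hp1, k1, hk1, rfl⟩ <;>
    rcases h2 with ⟨a2, ha2, rfl⟩ | ⟨t2, ht2, p2, hp2, k2, hk2, rfl⟩
  · rw [mem_rect_iff] at m1 m2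
    have : a1 = a2 := by omega
    subst this; rfl
  · exfalso
    rw [mem_rect_iff] at m1
    rw [mem_rect_elt hb0] at m2
    obtain ⟨ha, hb', hc⟩ := m2
    have hij : i = j := by omega
    rw [← hij, ha] at hc
    exact lt_irrefl _ hc
  · exfalso
    rw [mem_rect_iff] at m2
    rw [mem_rect_elt hb0] at m1
    obtain ⟨ha, hb', hc⟩ := m1
    have hij : i = j := by omega
    rw [← hij, ha] at hc
    exact lt_irrefl _ hc
  · rcases lt_trichotomy t1 t2 with h | h | h
    · exact absurd (key t1 p1 k1 t2 p2 k2 hk1 hk2 m1 m2 h) (fun f => f.elim)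
    · subst h
      rw [mem_rect_elt hb0] at m1 m2
      obtain ⟨a1, b1, c1⟩ := m1
      obtain ⟨a2, b2, c2⟩ := m2
      have hp : p1 = p2 := by rw [← b1, ← b2]
      subst hp
      have hk : k1 = k2 := by
        have := a1.symm.trans a2
        omega
      subst hk; rfl
    · exact absurd (key t2 p2 k2 t1 p1 k1 hk2 hk1 m2 m1 h) (fun f => f.elim)

lemma fam_cover {b y : ℕ} (hb : 2 ≤ b) {i j : ℕ} (hij : i ≤ j) (hj : j < b ^ y) :
    ∃ e ∈ fam b y, (i, j) ∈ rect e := by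
  have hb0 : 0 < b := by omega
  rcases eq_or_lt_of_le hij with rfl | hlt
  · exact ⟨((i, i), (i, i)), mem_fam.mpr (Or.inl ⟨i, hj, rfl⟩),
      by rw [mem_rect_iff]; omega⟩
  · have hi : i < b ^ y := lt_of_le_of_lt hij hj
    have hex : ∃ t, i / b ^ t = j / b ^ t :=
      ⟨y, by rw [Nat.div_eq_of_lt hi, Nat.div_eq_of_lt hj]⟩
    classical
    have ht0y : Nat.find hex ≤ y :=
      Nat.find_min' hex (by rw [Nat.div_eq_of_lt hi, Nat.div_eq_of_lt hj])
    have ht0pos : Nat.find hex ≠ 0 := by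
      intro h0
      have := Nat.find_spec hex
      rw [h0] at this
      simp at this
      omega
    set t := Nat.find hex - 1 with htdef
    have ht1 : t + 1 = Nat.find hex := by omega
    have spec : i / b ^ (t+1) = j / b ^ (t+1) := by rw [ht1]; exact Nat.find_spec hex
    have notspec : ¬ (i / b ^ t = j / b ^ t) := Nat.find_min hex (by omega)
    have hlt' : i / b ^ t < j / b ^ t :=
      lt_of_le_of_ne (Nat.div_le_div_right hij) notspec
    set p := j / b ^ (t+1) with hpdef
    have hjp : (j / b ^ t) / b = p := by
      rw [hpdef, pow_succ, ← Nat.div_div_eq_div_mul]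
    have hip : (i / b ^ t) / b = p := by
      rw [← spec, pow_succ, ← Nat.div_div_eq_div_mul]
    have hlow : p * b ≤ i / b ^ t := ((div_eq_iff' hb0 p _).mp hip).1
    have hup : j / b ^ t < (p + 1) * b := ((div_eq_iff' hb0 p _).mp hjp).2
    have e4 : (p + 1) * b = p * b + b := by ring
    set k := i / b ^ t - p * b with hkdef
    have hk : i / b ^ t = p * b + k := by omega
    have hklt : k < b - 1 := by omega
    have hplt : p < b ^ (y - 1 - t) := by
      rw [hpdef, Nat.div_lt_iff_lt_mul (pow_pos hb0 (t+1))]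
      calc j < b ^ y := hj
      _ = b ^ (y - 1 - t) * b ^ (t+1) := by rw [← pow_add]; congr 1; omega
    refine ⟨elt b t p k, mem_fam.mpr (Or.inr ⟨t, by omega, p, hplt, k, hklt, rfl⟩), ?_⟩
    rw [mem_rect_elt hb0]
    exact ⟨hk, rfl, by omega⟩

lemma geom_sum (c y : ℕ) : (∑ s ∈ Finset.range y, (c+1) ^ s * c) + 1 = (c+1) ^ y := by
  induction y with
  | zero => simp
  | succ n ih =>
    rw [Finset.sum_range_succ, pow_succ]
    have : (∑ s ∈ Finset.range n, (c+1) ^ s * c) + (c+1) ^ n * c + 1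
        = ((∑ s ∈ Finset.range n, (c+1) ^ s * c) + 1) + (c+1) ^ n * c := by ring
    rw [this, ih]; ring

lemma fam_card {b y : ℕ} (hb : 2 ≤ b) : (fam b y).card ≤ 2 * b ^ y - 1 := by
  have hb0 : 0 < b := by omega
  obtain ⟨c, rfl⟩ : ∃ c, b = c + 1 := ⟨b - 1, by omega⟩
  have h1 : (diag ((c+1) ^ y)).card ≤ (c+1) ^ y := by
    calc (diag ((c+1) ^ y)).card ≤ (Finset.range ((c+1) ^ y)).card :=
      Finset.card_image_le
    _ = (c+1) ^ y := Finset.card_range _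
  have h2 : (off (c+1) y).card ≤ ∑ t ∈ Finset.range y, (c+1) ^ (y - 1 - t) * c := by
    refine le_trans Finset.card_biUnion_le (Finset.sum_le_sum ?_)
    intro t _
    calc ((Finset.range ((c+1) ^ (y - 1 - t)) ×ˢ Finset.range ((c+1) - 1)).image
          (fun pk => elt (c+1) t pk.1 pk.2)).card
        ≤ ((Finset.range ((c+1) ^ (y - 1 - t)) ×ˢ Finset.range ((c+1) - 1))).card :=
          Finset.card_image_le
    _ = (c+1) ^ (y - 1 - t) * c := by
          rw [Finset.card_product, Finset.card_range, Finset.card_range]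
          simp
  have h3 : ∑ t ∈ Finset.range y, (c+1) ^ (y - 1 - t) * c
      = ∑ t ∈ Finset.range y, (c+1) ^ t * c :=
    Finset.sum_range_reflect (fun t => (c+1) ^ t * c) y
  have h4 := geom_sum c y
  have h5 : (fam (c+1) y).card ≤ (diag ((c+1) ^ y)).card + (off (c+1) y).card :=
    Finset.card_union_le _ _
  omega

lemma fam_row {b y : ℕ} (hb : 2 ≤ b) (i : ℕ) :
    ((fam b y).filter (fun e => e.1.1 ≤ i ∧ i ≤ e.1.2)).card ≤ y + 1 := by
  have hb0 : 0 < b := by omega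
  rw [fam, Finset.filter_union]
  refine le_trans (Finset.card_union_le _ _) ?_
  have h1 : ((diag (b ^ y)).filter (fun e => e.1.1 ≤ i ∧ i ≤ e.1.2)).card ≤ 1 := by
    refine Finset.card_le_one.mpr ?_
    intro x hx x' hx'
    simp only [diag, Finset.mem_filter, Finset.mem_image, Finset.mem_range] at hx hx'
    obtain ⟨⟨a, _, rfl⟩, ha1, ha2⟩ := hx
    obtain ⟨⟨a', _, rfl⟩, ha1', ha2'⟩ := hx'
    simp only at ha1 ha2 ha1' ha2'
    have : a = a' := by omega
    subst this; rfl
  have h2 : ((off b y).filter (fun e => e.1.1 ≤ i ∧ i ≤ e.1.2)).card ≤ y := by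
    rw [off, Finset.filter_biUnion]
    refine le_trans Finset.card_biUnion_le ?_
    calc ∑ t ∈ Finset.range y, (((Finset.range (b ^ (y - 1 - t)) ×ˢ Finset.range (b - 1)).image
            (fun pk => elt b t pk.1 pk.2)).filter (fun e => e.1.1 ≤ i ∧ i ≤ e.1.2)).card
        ≤ ∑ t ∈ Finset.range y, 1 := by
          refine Finset.sum_le_sum ?_
          intro t _
          refine Finset.card_le_one.mpr ?_
          intro x hx x' hx'
          simp only [Finset.mem_filter, Finset.mem_image, Finset.mem_product,
            Finset.mem_range, Prod.exists] at hx hx'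
          obtain ⟨⟨p, k, ⟨hp, hk⟩, rfl⟩, hr⟩ := hx
          obtain ⟨⟨p', k', ⟨hp', hk'⟩, rfl⟩, hr'⟩ := hx'
          rw [row_elt hb0] at hr hr'
          have hP : p = i / b ^ (t+1) := (div_succ' hb0 hr (by omega)).symm
          have hP' : p' = i / b ^ (t+1) := (div_succ' hb0 hr' (by omega)).symm
          have : p = p' := by rw [hP, hP']
          subst this
          have : k = k' := by omega
          subst this; rfl
    _ = y := by simp
  omega

lemma fam_col {b y : ℕ} (hb : 2 ≤ b) (j : ℕ) :
    ((fam b y).filter (fun e => e.2.1 ≤ j ∧ j ≤ e.2.2)).card ≤ y * (b - 1) + 1 := by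
  have hb0 : 0 < b := by omega
  rw [fam, Finset.filter_union]
  refine le_trans (Finset.card_union_le _ _) ?_
  have h1 : ((diag (b ^ y)).filter (fun e => e.2.1 ≤ j ∧ j ≤ e.2.2)).card ≤ 1 := by
    refine Finset.card_le_one.mpr ?_
    intro x hx x' hx'
    simp only [diag, Finset.mem_filter, Finset.mem_image, Finset.mem_range] at hx hx'
    obtain ⟨⟨a, _, rfl⟩, ha1, ha2⟩ := hx
    obtain ⟨⟨a', _, rfl⟩, ha1', ha2'⟩ := hx'
    simp only at ha1 ha2 ha1' ha2'
    have : a = a' := by omega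
    subst this; rfl
  have h2 : ((off b y).filter (fun e => e.2.1 ≤ j ∧ j ≤ e.2.2)).card ≤ y * (b - 1) := by
    rw [off, Finset.filter_biUnion]
    refine le_trans Finset.card_biUnion_le ?_
    calc ∑ t ∈ Finset.range y, (((Finset.range (b ^ (y - 1 - t)) ×ˢ Finset.range (b - 1)).image
            (fun pk => elt b t pk.1 pk.2)).filter (fun e => e.2.1 ≤ j ∧ j ≤ e.2.2)).card
        ≤ ∑ t ∈ Finset.range y, (b - 1) := by
          refine Finset.sum_le_sum ?_
          intro t _
          have hsub : (((Finset.range (b ^ (y - 1 - t)) ×ˢ Finset.range (b - 1)).image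
              (fun pk => elt b t pk.1 pk.2)).filter (fun e => e.2.1 ≤ j ∧ j ≤ e.2.2))
              ⊆ (Finset.range (b - 1)).image (fun k => elt b t (j / b ^ (t+1)) k) := by
            intro x hx
            simp only [Finset.mem_filter, Finset.mem_image, Finset.mem_product,
              Finset.mem_range, Prod.exists] at hx ⊢
            obtain ⟨⟨p, k, ⟨hp, hk⟩, rfl⟩, hc⟩ := hx
            rw [col_elt hb0] at hc
            exact ⟨k, hk, by rw [← hc.1]⟩
          calc _ ≤ ((Finset.range (b - 1)).image (fun k => elt b t (j / b ^ (t+1)) k)).card :=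
                Finset.card_le_card hsub
          _ ≤ (Finset.range (b - 1)).card := Finset.card_image_le
          _ = b - 1 := Finset.card_range _
    _ = y * (b - 1) := by simp [mul_comm]
  omega

def trimf (m : ℕ) (e : (ℕ × ℕ) × (ℕ × ℕ)) : (ℕ × ℕ) × (ℕ × ℕ) :=
  (e.1, (e.2.1, min e.2.2 (m - 1)))

end StaircaseAux


open StaircaseAux in
theorem staircase_partition (b m y : ℕ) (hb : 2 ≤ b) (hm : 1 ≤ m)
    (hy : m ≤ b ^ y) (hyleast : ∀ y' : ℕ, m ≤ b ^ y' → y ≤ y') :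
    ∃ F : Finset ((ℕ × ℕ) × (ℕ × ℕ)),
      (∀ e ∈ F, e.1.1 ≤ e.1.2 ∧ e.2.1 ≤ e.2.2) ∧
      (∀ e1 ∈ F, ∀ e2 ∈ F, e1 ≠ e2 → Disjoint (rect e1) (rect e2)) ∧
      (∀ i j : ℕ, (i ≤ j ∧ j < m) ↔ ∃ e ∈ F, (i, j) ∈ rect e) ∧
      F.card ≤ 2 * b ^ y - 1 ∧
      (∀ i < m,
        (F.filter (fun e => e.1.1 ≤ i ∧ i ≤ e.1.2)).card ≤ y + 1) ∧
      (∀ j < m,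
        (F.filter (fun e => e.2.1 ≤ j ∧ j ≤ e.2.2)).card ≤ y * (b - 1) + 1) := by
  have hb0 : 0 < b := by omega
  classical
  refine ⟨((fam b y).filter (fun e => e.2.1 < m)).image (trimf m), ?_, ?_, ?_, ?_, ?_, ?_⟩
  · -- nonempty intervals
    intro e' he'
    simp only [Finset.mem_image, Finset.mem_filter] at he'
    obtain ⟨e, ⟨he, hem⟩, rfl⟩ := he'
    obtain ⟨h1, h2⟩ := fam_nonempty hb he
    simp only [trimf]
    exact ⟨h1, le_min h2 (by omega)⟩
  · -- disjointness
    intro e1' he1' e2' he2' hne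
    simp only [Finset.mem_image, Finset.mem_filter] at he1' he2'
    obtain ⟨e1, ⟨he1, hm1⟩, rfl⟩ := he1'
    obtain ⟨e2, ⟨he2, hm2⟩, rfl⟩ := he2'
    rw [Finset.disjoint_left]
    rintro ⟨i, j⟩ hij1 hij2
    have hr1 : (i, j) ∈ rect e1 := by
      simp only [rect, trimf, Finset.mem_product, Finset.mem_Icc, le_min_iff] at hij1 ⊢
      exact ⟨hij1.1, hij1.2.1, hij1.2.2.1⟩
    have hr2 : (i, j) ∈ rect e2 := by
      simp only [rect, trimf, Finset.mem_product, Finset.mem_Icc, le_min_iff] at hij2 ⊢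
      exact ⟨hij2.1, hij2.2.1, hij2.2.2.1⟩
    exact hne (by rw [fam_unique hb he1 he2 hr1 hr2])
  · -- coverage
    intro i j
    constructor
    · rintro ⟨hij, hjm⟩
      obtain ⟨e, he, hre⟩ := fam_cover hb hij (lt_of_lt_of_le hjm hy)
      have hcol : e.2.1 ≤ j := by
        have h' : (i, j) ∈ rect e := hre
        simp only [rect, Finset.mem_product, Finset.mem_Icc] at h'
        exact h'.2.1
      refine ⟨trimf m e,
        Finset.mem_image.mpr ⟨e, Finset.mem_filter.mpr ⟨he, by omega⟩, rfl⟩, ?_⟩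
      simp only [rect, trimf, Finset.mem_product, Finset.mem_Icc, le_min_iff] at hre ⊢
      exact ⟨hre.1, hre.2.1, hre.2.2, by omega⟩
    · rintro ⟨e', he', hre'⟩
      simp only [Finset.mem_image, Finset.mem_filter] at he'
      obtain ⟨e, ⟨he, hem⟩, rfl⟩ := he'
      simp only [rect, trimf, Finset.mem_product, Finset.mem_Icc, le_min_iff] at hre'
      have hre : (i, j) ∈ rect e := by
        simp only [rect, Finset.mem_product, Finset.mem_Icc]
        exact ⟨hre'.1, hre'.2.1, hre'.2.2.1⟩
      obtain ⟨h1, _⟩ := fam_sound hb he hre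
      exact ⟨h1, by have := hre'.2.2.2; omega⟩
  · -- cardinality
    calc (((fam b y).filter (fun e => e.2.1 < m)).image (trimf m)).card
        ≤ ((fam b y).filter (fun e => e.2.1 < m)).card := Finset.card_image_le
    _ ≤ (fam b y).card := Finset.card_filter_le _ _
    _ ≤ 2 * b ^ y - 1 := fam_card hb
  · -- rows
    intro i _
    rw [Finset.filter_image]
    calc ((((fam b y).filter (fun e => e.2.1 < m)).filter
            (fun e => (trimf m e).1.1 ≤ i ∧ i ≤ (trimf m e).1.2)).image (trimf m)).card
        ≤ (((fam b y).filter (fun e => e.2.1 < m)).filter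
            (fun e => (trimf m e).1.1 ≤ i ∧ i ≤ (trimf m e).1.2)).card :=
          Finset.card_image_le
    _ ≤ ((fam b y).filter (fun e => e.1.1 ≤ i ∧ i ≤ e.1.2)).card := by
          refine Finset.card_le_card ?_
          intro e hee
          simp only [Finset.mem_filter] at hee ⊢
          exact ⟨hee.1.1, hee.2⟩
    _ ≤ y + 1 := fam_row hb i
  · -- columns
    intro j hj
    rw [Finset.filter_image]
    calc ((((fam b y).filter (fun e => e.2.1 < m)).filter
            (fun e => (trimf m e).2.1 ≤ j ∧ j ≤ (trimf m e).2.2)).image (trimf m)).card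
        ≤ (((fam b y).filter (fun e => e.2.1 < m)).filter
            (fun e => (trimf m e).2.1 ≤ j ∧ j ≤ (trimf m e).2.2)).card :=
          Finset.card_image_le
    _ ≤ ((fam b y).filter (fun e => e.2.1 ≤ j ∧ j ≤ e.2.2)).card := by
          refine Finset.card_le_card ?_
          intro e hee
          simp only [Finset.mem_filter, trimf, le_min_iff] at hee
          exact Finset.mem_filter.mpr ⟨hee.1.1, hee.2.1, hee.2.2.1⟩
    _ ≤ y * (b - 1) + 1 := fam_col hb j
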